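/- Let C ⊆ ℝⁿ be compact and convex, m ≥ 2, f ∈ C^m(ℝⁿ) satisfying condition (CW^m) on C. Then there exists r > 0 such that for every x with 0 < d(x,C) ≤ r and every unit vector v, D²f(x)(v,v) ≥ −d(x,C)^{m−2}. -/

import Mathlib

/-- The sum `∑_{k=2}^m (t^{k-2}/(k-2)!) Dᵏf(y)(w^{k-2}, v²)` appearing in condition `(CWᵐ)`. -/
noncomputable def cwSum {n : ℕ} (m : ℕ) (f : EuclideanSpace ℝ (Fin n) → ℝ)
    (y v w : EuclideanSpace ℝ (Fin n)) (t : ℝ) : ℝ :=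
  ∑ k ∈ Finset.Icc 2 m,
    (t ^ (k - 2) / (Nat.factorial (k - 2))) *
      iteratedFDeriv ℝ k f y (fun i => if (i : ℕ) < k - 2 then w else v)

/-- Condition `(CWᵐ)` of Azagra-Mudarra on a set `C`. -/
def CW {n : ℕ} (m : ℕ) (f : EuclideanSpace ℝ (Fin n) → ℝ)
    (C : Set (EuclideanSpace ℝ (Fin n))) : Prop :=
  ∀ ε > (0:ℝ), ∃ tε > (0:ℝ), ∀ y ∈ C, ∀ v w : EuclideanSpace ℝ (Fin n),
    ‖v‖ = 1 → ‖w‖ = 1 → ∀ t : ℝ, 0 < t → t ≤ tε →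
      -ε * t ^ (m - 2) ≤ cwSum m f y v w t

/-- Reindexing `cwSum` as a sum over `range (p+1)`. -/
lemma cwSum_eq {n : ℕ} (p : ℕ) (f : EuclideanSpace ℝ (Fin n) → ℝ)
    (y v w : EuclideanSpace ℝ (Fin n)) (t : ℝ) :
    cwSum (p + 2) f y v w t =
      ∑ j ∈ Finset.range (p + 1),
        t ^ j / (Nat.factorial j) *
          iteratedFDeriv ℝ (j + 2) f y (fun i : Fin (j + 2) => if (i : ℕ) < j then w else v) := by
  induction p with
  | zero => simp [cwSum]
  | succ p ih =>
    rw [cwSum, show p + 1 + 2 = (p + 2) + 1 from rfl,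
      Finset.sum_Icc_succ_top (by omega)]
    have : (∑ k ∈ Finset.Icc 2 (p + 2),
        (t ^ (k - 2) / (Nat.factorial (k - 2))) *
          iteratedFDeriv ℝ k f y (fun i => if (i : ℕ) < k - 2 then w else v))
        = cwSum (p + 2) f y v w t := rfl
    rw [this, ih]
    conv_rhs => rw [Finset.sum_range_succ]
    rfl

/-- Derivative of `s ↦ Dᵏf(y+sw)(M)` along a line. -/
lemma line_hasDerivAt {n m : ℕ} {f : EuclideanSpace ℝ (Fin n) → ℝ}
    (hf : ContDiff ℝ (m : ℕ∞) f) {k : ℕ} (hk : k + 1 ≤ m)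
    (y w : EuclideanSpace ℝ (Fin n)) (M : Fin k → EuclideanSpace ℝ (Fin n)) (s : ℝ) :
    HasDerivAt (fun s : ℝ => iteratedFDeriv ℝ k f (y + s • w) M)
      (iteratedFDeriv ℝ (k + 1) f (y + s • w) (Fin.cons w M)) s := by
  have hc : HasDerivAt (fun s : ℝ => y + s • w) w s := by
    simpa using ((hasDerivAt_id s).smul_const w).const_add y
  have hdiff : Differentiable ℝ (iteratedFDeriv ℝ k f) :=
    hf.differentiable_iteratedFDeriv (by exact_mod_cast Nat.lt_of_succ_le hk)
  have h1 : HasDerivAt (fun s : ℝ => iteratedFDeriv ℝ k f (y + s • w))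
      (fderiv ℝ (iteratedFDeriv ℝ k f) (y + s • w) w) s :=
    (hdiff _).hasFDerivAt.comp_hasDerivAt s hc
  have h2 := ((ContinuousMultilinearMap.apply ℝ
      (fun _ : Fin k => EuclideanSpace ℝ (Fin n)) ℝ M).hasFDerivAt).comp_hasDerivAt s h1
  refine HasDerivAt.congr_deriv h2 ?_
  rw [iteratedFDeriv_succ_apply_left, Fin.cons_zero, Fin.tail_cons]
  rfl

/-- Iterated derivatives of `g(s) = D²f(y+sw)(v,v)`. -/
lemma iteratedDeriv_line {n m : ℕ} {f : EuclideanSpace ℝ (Fin n) → ℝ}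
    (hf : ContDiff ℝ (m : ℕ∞) f) (y w v : EuclideanSpace ℝ (Fin n)) :
    ∀ j, j + 2 ≤ m → ∀ s : ℝ,
      iteratedDeriv j (fun s : ℝ => iteratedFDeriv ℝ 2 f (y + s • w) (fun _ => v)) s
        = iteratedFDeriv ℝ (j + 2) f (y + s • w)
            (fun i : Fin (j + 2) => if (i : ℕ) < j then w else v) := by
  intro j
  induction j with
  | zero =>
    intro _ s
    rw [iteratedDeriv_zero]
    congr 1
  | succ j ih =>
    intro hj s
    rw [iteratedDeriv_succ]
    have hj' : j + 2 ≤ m := by omega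
    have heq : deriv (iteratedDeriv j
        (fun s : ℝ => iteratedFDeriv ℝ 2 f (y + s • w) (fun _ => v))) s
        = deriv (fun s : ℝ => iteratedFDeriv ℝ (j + 2) f (y + s • w)
            (fun i : Fin (j + 2) => if (i : ℕ) < j then w else v)) s := by
      apply Filter.EventuallyEq.deriv_eq
      filter_upwards with t using ih hj' t
    rw [heq, (line_hasDerivAt hf (k := j + 2) (by omega) y w _ s).deriv]
    congr 1
    funext i
    refine Fin.cases ?_ (fun i => ?_) i
    · simp
    · simp [Fin.cons_succ, Nat.succ_lt_succ_iff]

/-- Smoothness of `g`. -/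
lemma contDiff_line {n m : ℕ} {f : EuclideanSpace ℝ (Fin n) → ℝ}
    (hf : ContDiff ℝ (m : ℕ∞) f) (hm : 2 ≤ m) (y w v : EuclideanSpace ℝ (Fin n)) :
    ContDiff ℝ ((m - 2 : ℕ) : ℕ∞)
      (fun s : ℝ => iteratedFDeriv ℝ 2 f (y + s • w) (fun _ => v)) := by
  have h2 : ContDiff ℝ ((m - 2 : ℕ) : ℕ∞) (iteratedFDeriv ℝ 2 f) := by
    apply hf.iteratedFDeriv_right
    have : ((m - 2 : ℕ) : ℕ∞) + 2 = ((m : ℕ) : ℕ∞) := by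
      rw [show ((2:ℕ∞)) = ((2:ℕ):ℕ∞) from rfl, ← Nat.cast_add]
      norm_cast
      omega
    rw [← this]
    exact_mod_cast le_refl _
  have hc : ContDiff ℝ ((m - 2 : ℕ) : ℕ∞) (fun s : ℝ => y + s • w) :=
    contDiff_const.add (contDiff_id.smul contDiff_const)
  exact ((ContinuousMultilinearMap.apply ℝ
    (fun _ : Fin 2 => EuclideanSpace ℝ (Fin n)) ℝ (fun _ => v)).contDiff).comp (h2.comp hc)

/-- Taylor expansion with a "modulus of continuity" form of the remainder. -/
lemma taylor_aux (g : ℝ → ℝ) (p : ℕ) {t : ℝ} (ht : 0 < t) (hg : ContDiff ℝ (p : ℕ∞) g) :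
    ∃ ξ ∈ Set.Icc (0:ℝ) t,
      g t = (∑ j ∈ Finset.range (p + 1), t ^ j / (Nat.factorial j) * iteratedDeriv j g 0)
        + (iteratedDeriv p g ξ - iteratedDeriv p g 0) * t ^ p / (Nat.factorial p) := by
  have hu : UniqueDiffOn ℝ (Set.Icc (0:ℝ) t) := uniqueDiffOn_Icc ht
  have hW : ∀ j, j ≤ p → ∀ x ∈ Set.Icc (0:ℝ) t,
      iteratedDerivWithin j g (Set.Icc 0 t) x = iteratedDeriv j g x := by
    intro j
    induction j with
    | zero => intro _ x _; simp [iteratedDerivWithin_zero, iteratedDeriv_zero]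
    | succ j ih =>
      intro hj x hx
      rw [iteratedDerivWithin_succ, iteratedDeriv_succ,
        derivWithin_congr (fun z hz => ih (by omega) z hz) (ih (by omega) x hx)]
      exact DifferentiableAt.derivWithin
        ((hg.differentiable_iteratedDeriv j (by exact_mod_cast hj)) x) (hu x hx)
  cases p with
  | zero =>
    refine ⟨t, ⟨le_of_lt ht, le_refl t⟩, ?_⟩
    simp [iteratedDeriv_zero]
  | succ q =>
    obtain ⟨ξ, hξ, h⟩ := taylor_mean_remainder_lagrange (f := g) (x₀ := 0) (x := t) (n := q) ht.ne
      ((hg.of_le (by exact_mod_cast Nat.le_succ q)).contDiffOn)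
      (by rw [Set.uIcc_of_le ht.le, Set.uIoo_of_le ht.le]; exact (((hg.differentiable_iteratedDeriv q
          (by exact_mod_cast Nat.lt_succ_self q)).differentiableOn).congr
        (fun z hz => hW q (Nat.le_succ q) z (Set.Ioo_subset_Icc_self hz))))
    rw [Set.uIoo_of_le ht.le] at hξ
    rw [Set.uIcc_of_le ht.le] at h
    refine ⟨ξ, Set.Ioo_subset_Icc_self hξ, ?_⟩
    rw [taylor_within_apply] at h
    have hsum : (∑ k ∈ Finset.range (q + 1),
        (((k.factorial : ℝ))⁻¹ * (t - 0) ^ k) • iteratedDerivWithin k g (Set.Icc 0 t) 0)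
        = ∑ k ∈ Finset.range (q + 1), t ^ k / (Nat.factorial k) * iteratedDeriv k g 0 := by
      apply Finset.sum_congr rfl
      intro k hk
      rw [hW k ((Nat.le_of_lt_succ (Finset.mem_range.mp hk)).trans (Nat.le_succ q)) 0
        (Set.left_mem_Icc.mpr (le_of_lt ht))]
      rw [smul_eq_mul]
      ring
    rw [hsum, hW (q + 1) le_rfl ξ (Set.Ioo_subset_Icc_self hξ)] at h
    rw [Finset.sum_range_succ]
    have ht0 : t - 0 = t := by ring
    rw [ht0] at h
    have hfac : ((q + 1).factorial : ℝ) ≠ 0 := by positivity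
    field_simp at h ⊢
    linarith [h]

/-- If `C` is compact convex, `m ≥ 2`, `f ∈ Cᵐ(ℝⁿ)` satisfies `(CWᵐ)` on `C` (and `Dᵐf` is
uniformly continuous), then there is `r > 0` such that `D²f(x)(v,v) ≥ -d(x,C)^{m-2}` whenever
`0 < d(x,C) ≤ r` and `v` is a unit vector. -/
theorem stmt_3 {n : ℕ} (C : Set (EuclideanSpace ℝ (Fin n))) (hCc : IsCompact C)
    (hCconv : Convex ℝ C) (hCne : C.Nonempty) (m : ℕ) (hm : 2 ≤ m)
    (f : EuclideanSpace ℝ (Fin n) → ℝ) (hf : ContDiff ℝ (m : ℕ∞) f)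
    (hucont : UniformContinuous (iteratedFDeriv ℝ m f))
    (hcw : CW m f C) :
    ∃ r > (0:ℝ), ∀ x : EuclideanSpace ℝ (Fin n),
      0 < Metric.infDist x C → Metric.infDist x C ≤ r →
      ∀ v : EuclideanSpace ℝ (Fin n), ‖v‖ = 1 →
      -(Metric.infDist x C) ^ (m - 2) ≤ iteratedFDeriv ℝ 2 f x (fun _ => v) := by
  obtain ⟨p, rfl⟩ : ∃ p, m = p + 2 := ⟨m - 2, by omega⟩
  obtain ⟨tε, htε, hcw'⟩ := hcw (1/2) (by norm_num)
  have hfacpos : (0:ℝ) < (Nat.factorial p) / 2 := by positivity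
  obtain ⟨δ, hδ, hδ'⟩ := Metric.uniformContinuous_iff.mp hucont _ hfacpos
  refine ⟨min tε (δ / 2), by positivity, ?_⟩
  intro x hd0 hdr v hv
  set d := Metric.infDist x C with hd
  obtain ⟨y, hyC, hyd⟩ := hCc.exists_infDist_eq_dist hCne x
  set w := d⁻¹ • (x - y) with hw
  have hxy : ‖x - y‖ = d := by rw [← dist_eq_norm, ← hyd]
  have hwn : ‖w‖ = 1 := by
    rw [hw, norm_smul, hxy, norm_inv, Real.norm_eq_abs, abs_of_pos hd0,
      inv_mul_cancel₀ hd0.ne']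
  have hx : y + d • w = x := by
    rw [hw, smul_smul, mul_inv_cancel₀ hd0.ne', one_smul]
    abel
  set g : ℝ → ℝ := fun s => iteratedFDeriv ℝ 2 f (y + s • w) (fun _ => v) with hgdef
  have hgc : ContDiff ℝ (p : ℕ∞) g := by
    have := contDiff_line hf (by omega) y w v
    simpa using this
  obtain ⟨ξ, hξ, htay⟩ := taylor_aux g p hd0 hgc
  have hiter : ∀ j, j ≤ p → ∀ s : ℝ,
      iteratedDeriv j g s = iteratedFDeriv ℝ (j + 2) f (y + s • w)
        (fun i : Fin (j + 2) => if (i : ℕ) < j then w else v) :=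
    fun j hj s => iteratedDeriv_line hf y w v j (by omega) s
  have hcwb : -(1/2) * d ^ p ≤ cwSum (p + 2) f y v w d := by
    have := hcw' y hyC v w hv hwn d hd0 (le_trans hdr (min_le_left _ _))
    simpa using this
  have hcwsum : cwSum (p + 2) f y v w d
      = ∑ j ∈ Finset.range (p + 1), d ^ j / (Nat.factorial j) * iteratedDeriv j g 0 := by
    rw [cwSum_eq]
    apply Finset.sum_congr rfl
    intro j hj
    rw [hiter j (by simpa [Nat.lt_succ_iff] using hj) 0]
    simp
  -- remainder bound
  have hrem : |iteratedDeriv p g ξ - iteratedDeriv p g 0| ≤ (Nat.factorial p) / 2 := by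
    rw [hiter p le_rfl ξ, hiter p le_rfl 0]
    set M : Fin (p + 2) → EuclideanSpace ℝ (Fin n) :=
      fun i => if (i : ℕ) < p then w else v with hM
    have hdist : dist (y + ξ • w) (y + (0:ℝ) • w) < δ := by
      rw [dist_eq_norm]
      have : (y + ξ • w) - (y + (0:ℝ) • w) = ξ • w := by
        rw [zero_smul, add_zero]
        abel
      rw [this, norm_smul, hwn, mul_one, Real.norm_eq_abs, abs_of_nonneg hξ.1]
      have h1 : ξ ≤ d := hξ.2
      have h2 : d ≤ δ / 2 := le_trans hdr (min_le_right _ _)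
      linarith
    have hbound := hδ' hdist
    rw [dist_eq_norm] at hbound
    set T := iteratedFDeriv ℝ (p + 2) f (y + ξ • w)
    set S := iteratedFDeriv ℝ (p + 2) f (y + (0:ℝ) • w)
    have happ : T M - S M = (T - S) M := by simp
    rw [happ]
    calc |(T - S) M| ≤ ‖T - S‖ * ∏ i, ‖M i‖ := (T - S).le_opNorm M
      _ = ‖T - S‖ := by
          have : ∏ i, ‖M i‖ = 1 := by
            apply Finset.prod_eq_one
            intro i _
            by_cases h : (i : ℕ) < p <;> simp [hM, h, hwn, hv]
          rw [this, mul_one]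
      _ ≤ (Nat.factorial p) / 2 := le_of_lt hbound
  -- conclude
  have hgx : g d = iteratedFDeriv ℝ 2 f x (fun _ => v) := by
    rw [hgdef]
    simp only
    rw [hx]
  have hfp : (0:ℝ) < (Nat.factorial p) := by positivity
  have hdp : (0:ℝ) ≤ d ^ p := le_of_lt (pow_pos hd0 p)
  have h1 : -(((Nat.factorial p):ℝ) / 2) ≤ iteratedDeriv p g ξ - iteratedDeriv p g 0 :=
    neg_le_of_abs_le hrem
  have h2 : -(((Nat.factorial p):ℝ) / 2) * d ^ p ≤
      (iteratedDeriv p g ξ - iteratedDeriv p g 0) * d ^ p :=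
    mul_le_mul_of_nonneg_right h1 hdp
  have h3 : -(((Nat.factorial p):ℝ) / 2) * d ^ p / (Nat.factorial p) = -(d ^ p / 2) := by
    field_simp
  have hterm : -(d ^ p / 2) ≤
      (iteratedDeriv p g ξ - iteratedDeriv p g 0) * d ^ p / (Nat.factorial p) := by
    rw [← h3]
    exact (div_le_div_iff_of_pos_right hfp).mpr h2
  have hsum_ge : -(1/2) * d ^ p ≤
      ∑ j ∈ Finset.range (p + 1), d ^ j / (Nat.factorial j) * iteratedDeriv j g 0 := by
    rw [← hcwsum]; exact hcwb
  have hgoal : -(d ^ p) ≤ g d := by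
    rw [htay]
    linarith
  rw [show (p + 2) - 2 = p from by omega]
  rw [← hgx]
  exact hgoal
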